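/- arXiv:1405.0352 — 2 statements merged into one kernel-verified Lean document; each statement's English description precedes it below -/
import Mathlib

section
/- Let Z_1, ..., Z_n be independent random variables on a probability space and let T be a square-integrable real random variable measurable with respect to σ(Z_1, ..., Z_n). Then the Hájek projection T̂ of T satisfies Var(T̂) ≤ Var(T). -/
open MeasureTheory ProbabilityTheory Filter

/-- The Hájek projection of a square-integrable random variable `T` with respect to the
random variables `Z 1, ..., Z n`:
`T̂ = E[T] + ∑ i, (E[T | Z i] − E[T])`. -/
noncomputable def hajekProjection {Ω 𝒵 : Type*} [MeasurableSpace Ω]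
    [m𝒵 : MeasurableSpace 𝒵] (μ : Measure Ω) {n : ℕ} (Z : Fin n → Ω → 𝒵)
    (T : Ω → ℝ) : Ω → ℝ :=
  fun ω => (∫ x, T x ∂μ) + ∑ i, ((μ[T | m𝒵.comap (Z i)]) ω - ∫ x, T x ∂μ)

/-- The conditional expectation of a square-integrable function is square-integrable. -/
lemma memℒp_two_condexp' {α : Type*} {m m0 : MeasurableSpace α} {μ : Measure α}
    [IsFiniteMeasure μ] {f : α → ℝ} (hf : MemLp f 2 μ) :
    MemLp (μ[f|m]) 2 μ := by
  by_cases hm : m ≤ m0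
  swap
  · rw [condExp_of_not_le hm]; exact memLp_const 0
  have hfi : Integrable f μ := hf.integrable one_le_two
  have h_eq : (condExpL2 ℝ ℝ hm (hf.toLp f) : α → ℝ) =ᵐ[μ] μ[f|m] := by
    refine ae_eq_condExp_of_forall_setIntegral_eq hm hfi
      (fun s _ _ => (integrable_condExpL2_of_isFiniteMeasure hm).integrableOn)
      (fun s hs hμs => ?_) (aestronglyMeasurable_condExpL2 hm _)
    rw [integral_condExpL2_eq hm (hf.toLp f) hs hμs.ne]
    exact setIntegral_congr_ae (hm s hs) ((hf.coeFn_toLp).mono fun x hx _ => hx)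
  exact (Lp.memLp ((condExpL2 ℝ ℝ hm (hf.toLp f) : α →₂[μ] ℝ))).ae_eq h_eq

/-- The product of two square-integrable real functions is integrable. -/
lemma integrable_mul_of_memℒp_two {α : Type*} {m : MeasurableSpace α} {μ : Measure α}
    {f g : α → ℝ} (hf : MemLp f 2 μ) (hg : MemLp g 2 μ) :
    Integrable (fun x => f x * g x) μ := by
  have h := L2.integrable_inner (𝕜 := ℝ) (hf.toLp f) (hg.toLp g)
  refine h.congr ?_
  filter_upwards [hf.coeFn_toLp, hg.coeFn_toLp] with x h1 h2
  simp [h1, h2, RCLike.inner_apply, mul_comm]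

/-- If `Z 1, ..., Z n` are independent and `T` is a square-integrable
real random variable measurable with respect to `σ(Z 1, ..., Z n)`, then the Hájek
projection `T̂` of `T` satisfies `Var T̂ ≤ Var T`. -/
theorem variance_hajekProjection_le {Ω 𝒵 : Type*} [MeasurableSpace Ω]
    [m𝒵 : MeasurableSpace 𝒵] (μ : Measure Ω) [IsProbabilityMeasure μ]
    {n : ℕ} (Z : Fin n → Ω → 𝒵)
    (hZmeas : ∀ i, Measurable (Z i))
    (hindep : iIndepFun (m := fun _ => m𝒵) Z μ)
    (T : Ω → ℝ)
    (hTmeas : Measurable[⨆ i, m𝒵.comap (Z i)] T)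
    (hT2 : MemLp T 2 μ) :
    variance (hajekProjection μ Z T) μ ≤ variance T μ := by
  classical
  have hTint : Integrable T μ := hT2.integrable one_le_two
  set c : ℝ := ∫ x, T x ∂μ with hc
  set m : Fin n → MeasurableSpace Ω := fun i => m𝒵.comap (Z i) with hm_def
  have hm : ∀ i, m i ≤ ‹MeasurableSpace Ω› := fun i => (hZmeas i).comap_le
  set f : Fin n → Ω → ℝ := fun i ω => (μ[T|m i]) ω - c with hf_def
  have hf2 : ∀ i, MemLp (f i) 2 μ := fun i => (memℒp_two_condexp' hT2).sub (memLp_const c)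
  have hfint : ∀ i, Integrable (f i) μ := fun i => (hf2 i).integrable one_le_two
  have hfsm : ∀ i, StronglyMeasurable[m i] (f i) := fun i =>
    stronglyMeasurable_condExp.sub stronglyMeasurable_const
  have hfmean : ∀ i, ∫ x, f i x ∂μ = 0 := by
    intro i
    simp only [hf_def]
    rw [integral_sub integrable_condExp (integrable_const c), integral_condExp (hm i),
      integral_const]
    simp [hc]
  set X : Ω → ℝ := fun ω => T ω - c with hX_def
  have hX2 : MemLp X 2 μ := hT2.sub (memLp_const c)
  have hXint : Integrable X μ := hX2.integrable one_le_two
  -- conditional expectation of X given m i is f i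
  have hcondX : ∀ i, μ[X|m i] =ᵐ[μ] f i := by
    intro i
    have h1 : μ[X|m i] =ᵐ[μ] μ[T|m i] - μ[(fun _ => c)|m i] :=
      condExp_sub hTint (integrable_const c) _
    refine h1.trans ?_
    rw [condExp_const (hm i)]
    rfl
  -- key identity A : ∫ f i * X = ∫ f i * f i
  have keyA : ∀ i, ∫ x, f i x * X x ∂μ = ∫ x, f i x * f i x ∂μ := by
    intro i
    have hmul : Integrable (f i * X) μ := integrable_mul_of_memℒp_two (hf2 i) hX2
    have h1 : μ[f i * X|m i] =ᵐ[μ] f i * μ[X|m i] :=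
      condExp_mul_of_stronglyMeasurable_left (hfsm i) hmul hXint
    have h2 : μ[f i * X|m i] =ᵐ[μ] fun x => f i x * f i x :=
      h1.trans ((hcondX i).mono fun x hx => by simp [hx])
    calc ∫ x, f i x * X x ∂μ = ∫ x, (μ[f i * X|m i]) x ∂μ :=
          (integral_condExp (hm i)).symm
      _ = ∫ x, f i x * f i x ∂μ := integral_congr_ae h2
  -- key identity B : cross terms vanish
  have keyB : ∀ i j, i ≠ j → ∫ x, f i x * f j x ∂μ = 0 := by
    intro i j hij
    have hZij : IndepFun (Z i) (Z j) μ := hindep.indepFun hij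
    have hind : Indep (m i) (m j) μ := hZij
    have hIF : IndepFun (f i) (f j) μ :=
      indep_of_indep_of_le_left
        (indep_of_indep_of_le_right hind ((hfsm j).measurable.comap_le))
        ((hfsm i).measurable.comap_le)
    have h := IndepFun.integral_fun_mul_eq_mul_integral hIF (hfint i).aestronglyMeasurable
      (hfint j).aestronglyMeasurable
    simpa [hfmean i, hfmean j] using h
  set Y : Ω → ℝ := fun ω => ∑ i, f i ω with hY_def
  have hY2 : MemLp Y 2 μ := by
    have h := memLp_finsetSum' Finset.univ (fun i (_ : i ∈ Finset.univ) => hf2 i)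
    exact h.ae_eq (Filter.Eventually.of_forall fun x => by simp [hY_def])
  have hYint : Integrable Y μ := hY2.integrable one_le_two
  have hYmean : ∫ x, Y x ∂μ = 0 := by
    rw [hY_def]
    rw [integral_finset_sum _ (fun i _ => hfint i)]
    simp [hfmean]
  set S : ℝ := ∑ i, ∫ x, f i x * f i x ∂μ with hS_def
  -- ∫ X Y = S
  have hXY : ∫ x, X x * Y x ∂μ = S := by
    have h1 : ∀ x, X x * Y x = ∑ i, f i x * X x := by
      intro x
      rw [hY_def]
      rw [Finset.mul_sum]
      exact Finset.sum_congr rfl fun i _ => mul_comm _ _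
    calc ∫ x, X x * Y x ∂μ = ∫ x, ∑ i, f i x * X x ∂μ := by
          exact integral_congr_ae (Eventually.of_forall fun x => h1 x)
      _ = ∑ i, ∫ x, f i x * X x ∂μ :=
          integral_finset_sum _ fun i _ => integrable_mul_of_memℒp_two (hf2 i) hX2
      _ = S := Finset.sum_congr rfl fun i _ => keyA i
  -- ∫ Y Y = S
  have hYY : ∫ x, Y x * Y x ∂μ = S := by
    have h1 : ∀ x, Y x * Y x = ∑ i, ∑ j, f i x * f j x := by
      intro x
      rw [hY_def, Finset.sum_mul_sum]
    calc ∫ x, Y x * Y x ∂μ = ∫ x, ∑ i, ∑ j, f i x * f j x ∂μ :=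
          integral_congr_ae (Eventually.of_forall fun x => h1 x)
      _ = ∑ i, ∑ j, ∫ x, f i x * f j x ∂μ := by
          rw [integral_finset_sum _ fun i _ =>
            integrable_finset_sum _ fun j _ => integrable_mul_of_memℒp_two (hf2 i) (hf2 j)]
          exact Finset.sum_congr rfl fun i _ =>
            integral_finset_sum _ fun j _ => integrable_mul_of_memℒp_two (hf2 i) (hf2 j)
      _ = S := by
          refine Finset.sum_congr rfl fun i _ => ?_
          rw [Finset.sum_eq_single i (fun j _ hji => keyB i j (Ne.symm hji))
            (fun h => absurd (Finset.mem_univ i) h)]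
  -- the Hájek projection is c + Y
  have hHeq : hajekProjection μ Z T = fun ω => c + Y ω := by
    funext ω
    simp only [hajekProjection, hY_def, hf_def, hm_def, hc]
  -- variance of T
  have hVarT : variance T μ = ∫ x, X x * X x ∂μ := by
    rw [variance_eq_integral hT2.aestronglyMeasurable.aemeasurable]
    congr 1
    funext x
    simp [hX_def, hc, sq]
  -- variance of the Hájek projection
  have hH2 : MemLp (hajekProjection μ Z T) 2 μ := by
    rw [hHeq]
    exact (memLp_const c).add hY2
  have hHmean : ∫ x, hajekProjection μ Z T x ∂μ = c := by
    rw [hHeq, integral_add (integrable_const c) hYint, hYmean, integral_const]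
    simp
  have hVarH : variance (hajekProjection μ Z T) μ = ∫ x, Y x * Y x ∂μ := by
    rw [variance_eq_integral hH2.aestronglyMeasurable.aemeasurable]
    have h2 : (hajekProjection μ Z T - fun _ => ∫ x, hajekProjection μ Z T x ∂μ) = Y := by
      rw [hHmean, hHeq]
      funext x
      simp
    rw [hHmean, hHeq]
    congr 1
    funext x
    simp [sq]
  -- positivity of ∫ (X - Y)²
  have hXX_int : Integrable (fun x => X x * X x) μ := integrable_mul_of_memℒp_two hX2 hX2
  have hXY_int : Integrable (fun x => X x * Y x) μ := integrable_mul_of_memℒp_two hX2 hY2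
  have hYY_int : Integrable (fun x => Y x * Y x) μ := integrable_mul_of_memℒp_two hY2 hY2
  have hexp : ∫ x, (X x - Y x) * (X x - Y x) ∂μ
      = ∫ x, X x * X x ∂μ - 2 * ∫ x, X x * Y x ∂μ + ∫ x, Y x * Y x ∂μ := by
    have h1 : ∀ x, (X x - Y x) * (X x - Y x)
        = X x * X x - 2 * (X x * Y x) + Y x * Y x := by intro x; ring
    rw [integral_congr_ae (Eventually.of_forall h1)]
    rw [integral_add (by exact (hXX_int.sub (hXY_int.const_mul 2))) hYY_int,
      integral_sub hXX_int (hXY_int.const_mul 2), integral_const_mul]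
  have hpos : 0 ≤ ∫ x, (X x - Y x) * (X x - Y x) ∂μ :=
    integral_nonneg fun x => mul_self_nonneg _
  rw [hVarH, hVarT, hYY]
  rw [hexp, hXY, hYY] at hpos
  linarith
end

section
/- For each n, let Z_{n,1}, ..., Z_{n,n} be independent random variables and let T_n be a square-integrable real random variable measurable with respect to σ(Z_{n,1}, ..., Z_{n,n}) with Var(T_n) > 0, and let T̂_n be its Hájek projection. If lim_{n→∞} Var(T̂_n)/Var(T_n) = 1, then lim_{n→∞} E[(T̂_n − T_n)²]/Var(T_n) = 0. -/
open MeasureTheory ProbabilityTheory Filter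
open scoped ENNReal

section Aux

variable {Ω : Type*} {m0 : MeasurableSpace Ω} {μ : Measure Ω}

private lemma memLp_two_condexp [IsFiniteMeasure μ] {m : MeasurableSpace Ω} (hm : m ≤ m0)
    {f : Ω → ℝ} (hf : MemLp f 2 μ) : MemLp (μ[f|m]) 2 μ := by
  have h := Lp.memLp ((condExpL2 ℝ ℝ hm (hf.toLp f) : Lp ℝ 2 μ))
  refine h.ae_eq (ae_eq_condExp_of_forall_setIntegral_eq hm (hf.integrable one_le_two)
    (fun s _ hμs => integrableOn_condExpL2_of_measure_ne_top hm hμs.ne _)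
    (fun s hs hμs => ?_) (aestronglyMeasurable_condExpL2 hm _))
  rw [integral_condExpL2_eq hm (hf.toLp f) hs hμs.ne]
  exact integral_congr_ae (ae_restrict_of_ae (MemLp.coeFn_toLp hf))

private lemma integrable_mul_L2 {f g : Ω → ℝ} (hf : MemLp f 2 μ) (hg : MemLp g 2 μ) :
    Integrable (fun ω => f ω * g ω) μ := by
  have h : (1 : ℝ≥0∞) / 1 = 1 / 2 + 1 / 2 := by
    rw [one_div, one_div, ENNReal.inv_two_add_inv_two]
    simp
  have := hg.smul (r := 1) hf (hpqr := ⟨by rw [ENNReal.inv_two_add_inv_two, inv_one]⟩)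
  rw [memLp_one_iff_integrable] at this
  exact this

private lemma hajek_sq_diff [IsProbabilityMeasure μ] {𝒵 : Type*} [m𝒵 : MeasurableSpace 𝒵]
    {n : ℕ} {Z : Fin n → Ω → 𝒵} (hZmeas : ∀ i, Measurable (Z i))
    (hindep : iIndepFun Z μ)
    {T : Ω → ℝ} (hT2 : MemLp T 2 μ) :
    ∫ ω, (hajekProjection μ Z T ω - T ω) ^ 2 ∂μ
      = variance T μ - variance (hajekProjection μ Z T) μ := by
  set c : ℝ := ∫ x, T x ∂μ with hc
  set m : Fin n → MeasurableSpace Ω := fun i => m𝒵.comap (Z i) with hm_def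
  have hm : ∀ i, m i ≤ m0 := fun i => (hZmeas i).comap_le
  set f : Fin n → Ω → ℝ := fun i ω => (μ[T| m i]) ω - c with hf_def
  set S : Ω → ℝ := fun ω => ∑ i, f i ω with hS_def
  set U : Ω → ℝ := fun ω => T ω - c with hU_def
  have hTint : Integrable T μ := hT2.integrable one_le_two
  have hg2 : ∀ i, MemLp (μ[T| m i]) 2 μ := fun i => memLp_two_condexp (hm i) hT2
  have hf2 : ∀ i, MemLp (f i) 2 μ := fun i => (hg2 i).sub (memLp_const c)
  have hfint : ∀ i, Integrable (f i) μ := fun i => (hf2 i).integrable one_le_two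
  have hU2 : MemLp U 2 μ := hT2.sub (memLp_const c)
  have hS2 : MemLp S 2 μ := memLp_finsetSum _ fun i _ => hf2 i
  have hfmean : ∀ i, ∫ ω, f i ω ∂μ = 0 := by
    intro i
    have h1 : ∫ ω, f i ω ∂μ = (∫ ω, (μ[T|m i]) ω ∂μ) - ∫ _, c ∂μ :=
      integral_sub integrable_condExp (integrable_const c)
    rw [h1, integral_condExp (hm i), integral_const]
    simp [hc]
  -- cross terms vanish by independence
  have hcross : ∀ i j, i ≠ j → ∫ ω, f i ω * f j ω ∂μ = 0 := by
    intro i j hij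
    have hmeasi : Measurable[m i] (f i) :=
      (stronglyMeasurable_condExp.measurable).sub measurable_const
    have hmeasj : Measurable[m j] (f j) :=
      (stronglyMeasurable_condExp.measurable).sub measurable_const
    have hind : IndepFun (f i) (f j) μ := by
      rw [IndepFun_iff_Indep]
      have hZij : Indep (m i) (m j) μ := (IndepFun_iff_Indep _ _ _).mp (hindep.indepFun hij)
      exact Kernel.indep_of_indep_of_le_right
        (Kernel.indep_of_indep_of_le_left hZij hmeasi.comap_le) hmeasj.comap_le
    have h := hind.integral_fun_mul_eq_mul_integral (hf2 i).aestronglyMeasurable (hf2 j).aestronglyMeasurable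
    rw [h, hfmean i, hfmean j, mul_zero]
  have hfT_int : ∀ i, Integrable (fun ω => f i ω * T ω) μ :=
    fun i => integrable_mul_L2 (hf2 i) hT2
  -- pull-out property
  have hpull : ∀ i, ∫ ω, f i ω * T ω ∂μ = ∫ ω, f i ω ^ 2 ∂μ := by
    intro i
    have hsm : StronglyMeasurable[m i] (f i) :=
      stronglyMeasurable_condExp.sub stronglyMeasurable_const
    have hce : μ[fun ω => f i ω * T ω | m i] =ᵐ[μ] fun ω => f i ω * (μ[T|m i]) ω :=
      condExp_mul_of_stronglyMeasurable_left hsm (hfT_int i) hTint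
    calc ∫ ω, f i ω * T ω ∂μ
        = ∫ ω, (μ[fun ω => f i ω * T ω| m i]) ω ∂μ :=
          (integral_condExp (hm i)).symm
      _ = ∫ ω, f i ω * (μ[T|m i]) ω ∂μ := integral_congr_ae hce
      _ = ∫ ω, (f i ω ^ 2 + c * f i ω) ∂μ := by
          refine integral_congr_ae (Filter.Eventually.of_forall fun ω => ?_)
          have h1 : (μ[T|m i]) ω = f i ω + c := by simp [hf_def]
          show f i ω * (μ[T|m i]) ω = f i ω ^ 2 + c * f i ω
          rw [h1]; ring
      _ = ∫ ω, f i ω ^ 2 ∂μ + c * ∫ ω, f i ω ∂μ := by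
          rw [integral_add ((hf2 i).integrable_sq) ((hfint i).const_mul c),
            integral_const_mul c]
      _ = ∫ ω, f i ω ^ 2 ∂μ := by rw [hfmean i]; ring
  -- integral of S²
  have hSsq : ∫ ω, S ω ^ 2 ∂μ = ∑ i, ∫ ω, f i ω ^ 2 ∂μ := by
    have h1 : ∀ ω, S ω ^ 2 = ∑ i, ∑ j, f i ω * f j ω := by
      intro ω; rw [sq, hS_def, Finset.sum_mul_sum]
    calc ∫ ω, S ω ^ 2 ∂μ = ∫ ω, ∑ i, ∑ j, f i ω * f j ω ∂μ := by
          exact integral_congr_ae (Filter.Eventually.of_forall fun ω => h1 ω)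
      _ = ∑ i, ∫ ω, ∑ j, f i ω * f j ω ∂μ :=
          integral_finset_sum _ fun i _ =>
            integrable_finset_sum _ fun j _ => integrable_mul_L2 (hf2 i) (hf2 j)
      _ = ∑ i, ∑ j, ∫ ω, f i ω * f j ω ∂μ :=
          Finset.sum_congr rfl fun i _ =>
            integral_finset_sum _ fun j _ => integrable_mul_L2 (hf2 i) (hf2 j)
      _ = ∑ i, ∫ ω, f i ω * f i ω ∂μ :=
          Finset.sum_congr rfl fun i _ =>
            Finset.sum_eq_single i (fun j _ hji => hcross i j (Ne.symm hji))
              (fun h => absurd (Finset.mem_univ i) h)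
      _ = ∑ i, ∫ ω, f i ω ^ 2 ∂μ := by
          refine Finset.sum_congr rfl fun i _ => ?_
          refine integral_congr_ae (Filter.Eventually.of_forall fun ω => ?_)
          ring
  -- integral of S·U
  have hSU : ∫ ω, S ω * U ω ∂μ = ∫ ω, S ω ^ 2 ∂μ := by
    have h1 : ∀ i, ∫ ω, f i ω * U ω ∂μ = ∫ ω, f i ω ^ 2 ∂μ := by
      intro i
      have h2 : ∫ ω, f i ω * U ω ∂μ = ∫ ω, (f i ω * T ω - c * f i ω) ∂μ := by
        refine integral_congr_ae (Filter.Eventually.of_forall fun ω => ?_)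
        simp only [hU_def]; ring
      rw [h2, integral_sub (hfT_int i) ((hfint i).const_mul c), integral_const_mul c,
        hfmean i, hpull i]
      ring
    calc ∫ ω, S ω * U ω ∂μ = ∫ ω, ∑ i, f i ω * U ω ∂μ := by
          refine integral_congr_ae (Filter.Eventually.of_forall fun ω => ?_)
          show S ω * U ω = ∑ i, f i ω * U ω
          simp only [hS_def]
          rw [Finset.sum_mul]
      _ = ∑ i, ∫ ω, f i ω * U ω ∂μ :=
          integral_finset_sum _ fun i _ => integrable_mul_L2 (hf2 i) hU2
      _ = ∑ i, ∫ ω, f i ω ^ 2 ∂μ := Finset.sum_congr rfl fun i _ => h1 i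
      _ = ∫ ω, S ω ^ 2 ∂μ := hSsq.symm
  -- the Hájek projection in terms of S
  have hhat : ∀ ω, hajekProjection μ Z T ω = c + S ω := fun ω => rfl
  have hhat2 : MemLp (hajekProjection μ Z T) 2 μ := by
    have : MemLp (fun ω => c + S ω) 2 μ := (memLp_const c).add hS2
    exact this.ae_eq (Filter.Eventually.of_forall fun ω => (hhat ω).symm)
  have hSmean : ∫ ω, S ω ∂μ = 0 := by
    rw [hS_def]
    rw [integral_finset_sum _ fun i _ => hfint i]
    exact Finset.sum_eq_zero fun i _ => hfmean i
  have hSint : Integrable S μ := hS2.integrable one_le_two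
  have hhatmean : ∫ ω, hajekProjection μ Z T ω ∂μ = c := by
    have h1 : ∫ ω, hajekProjection μ Z T ω ∂μ = ∫ ω, (c + S ω) ∂μ :=
      integral_congr_ae (Filter.Eventually.of_forall fun ω => hhat ω)
    rw [h1, integral_add (integrable_const c) hSint, integral_const, hSmean]
    simp
  -- variances
  have hvarT : variance T μ = ∫ ω, U ω ^ 2 ∂μ := by
    rw [variance_eq_integral hT2.aemeasurable]
  have hvarHat : variance (hajekProjection μ Z T) μ = ∫ ω, S ω ^ 2 ∂μ := by
    rw [variance_eq_integral hhat2.aemeasurable]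
    refine integral_congr_ae (Filter.Eventually.of_forall fun ω => ?_)
    simp only [Pi.pow_apply, Pi.sub_apply, hhatmean, hhat ω]
    ring
  -- expand the square
  have hdiff : ∫ ω, (hajekProjection μ Z T ω - T ω) ^ 2 ∂μ
      = ∫ ω, (S ω ^ 2 - 2 * (S ω * U ω) + U ω ^ 2) ∂μ := by
    refine integral_congr_ae (Filter.Eventually.of_forall fun ω => ?_)
    show (hajekProjection μ Z T ω - T ω) ^ 2 = S ω ^ 2 - 2 * (S ω * U ω) + U ω ^ 2
    rw [hhat ω]; simp only [hU_def]; ring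
  have hIntS2 : Integrable (fun ω => S ω ^ 2) μ := hS2.integrable_sq
  have hIntSU : Integrable (fun ω => S ω * U ω) μ := integrable_mul_L2 hS2 hU2
  have hIntU2 : Integrable (fun ω => U ω ^ 2) μ := hU2.integrable_sq
  have hInt2SU : Integrable (fun ω => 2 * (S ω * U ω)) μ := hIntSU.const_mul 2
  have hInt12 : Integrable (fun ω => S ω ^ 2 - 2 * (S ω * U ω)) μ := hIntS2.sub hInt2SU
  rw [hdiff, integral_add hInt12 hIntU2, integral_sub hIntS2 hInt2SU,
    integral_const_mul 2 _, hSU, hvarT, hvarHat]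
  ring

end Aux

/-- For each `n`, let `Z n 1, ..., Z n n` be independent random
variables and `T n` a square-integrable real random variable, measurable with respect to
`σ(Z n 1, ..., Z n n)`, with `Var (T n) > 0`, and let `T̂ n` be its Hájek projection.
If `Var (T̂ n) / Var (T n) → 1`, then `E[(T̂ n − T n)²] / Var (T n) → 0`. -/
theorem tendsto_sq_diff_hajekProjection_of_variance_ratio {Ω 𝒵 : Type*}
    [MeasurableSpace Ω] [m𝒵 : MeasurableSpace 𝒵]
    (μ : Measure Ω) [IsProbabilityMeasure μ]
    (Z : (n : ℕ) → Fin n → Ω → 𝒵)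
    (hZmeas : ∀ n i, Measurable (Z n i))
    (hindep : ∀ n, iIndepFun (Z n) μ)
    (T : ℕ → Ω → ℝ)
    (hTmeas : ∀ n, Measurable[⨆ i, m𝒵.comap (Z n i)] (T n))
    (hT2 : ∀ n, MemLp (T n) 2 μ)
    (hTvar : ∀ n, 0 < variance (T n) μ)
    (hratio : Tendsto
      (fun n => variance (hajekProjection μ (Z n) (T n)) μ / variance (T n) μ)
      atTop (nhds 1)) :
    Tendsto
      (fun n => (∫ ω, (hajekProjection μ (Z n) (T n) ω - T n ω) ^ 2 ∂μ)
        / variance (T n) μ)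
      atTop (nhds 0) := by
  have key : ∀ n, ∫ ω, (hajekProjection μ (Z n) (T n) ω - T n ω) ^ 2 ∂μ
      = variance (T n) μ - variance (hajekProjection μ (Z n) (T n)) μ :=
    fun n => hajek_sq_diff (hZmeas n) (hindep n) (hT2 n)
  have heq : (fun n => (∫ ω, (hajekProjection μ (Z n) (T n) ω - T n ω) ^ 2 ∂μ)
        / variance (T n) μ)
      = fun n => 1 - variance (hajekProjection μ (Z n) (T n)) μ / variance (T n) μ := by
    funext n
    rw [key n, sub_div, div_self (hTvar n).ne']
  rw [heq]
  have h : Tendsto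
      (fun n => 1 - variance (hajekProjection μ (Z n) (T n)) μ / variance (T n) μ)
      atTop (nhds (1 - 1)) := tendsto_const_nhds.sub hratio
  simpa using h
end
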